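/- Let Z be a principal ideal domain with fraction field Q, and let P_1(t),…,P_ℓ(t) ∈ Z[t] be ℓ ≥ 2 nonzero polynomials that are coprime in Q[t]. Then the set D of ideals of Z given by D = { the ideal of Z generated by P_1(m),…,P_ℓ(m) : m ∈ Z } is finite and is closed under ideal sum, i.e., for any m, m' ∈ Z there exists m'' ∈ Z such that the ideal generated by P_1(m''),…,P_ℓ(m'') equals the sum of the ideals generated by P_1(m),…,P_ℓ(m) and by P_1(m'),…,P_ℓ(m'). -/
import Mathlib

open Polynomial UniqueFactorizationMonoid Multiset

theorem aux_common_denominator (Z : Type*) [CommRing Z] [IsDomain Z] [IsPrincipalIdealRing Z]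
    (ℓ : ℕ) (P : Fin ℓ → Polynomial Z)
    (hcop : ∀ d : Polynomial (FractionRing Z),
      (∀ i, d ∣ (P i).map (algebraMap Z (FractionRing Z))) → IsUnit d) :
    ∃ c : Z, c ≠ 0 ∧ ∃ B : Fin ℓ → Polynomial Z, Polynomial.C c = ∑ i, B i * P i := by
  set K := FractionRing Z
  set φ := algebraMap Z K with hφ
  have hspan : Ideal.span (Set.range fun i => (P i).map φ) = ⊤ := by
    set I := Ideal.span (Set.range fun i => (P i).map φ) with hI
    obtain ⟨g, hg⟩ : I.IsPrincipal := inferInstance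
    have hg' : I = Ideal.span {g} := hg
    have hgd : ∀ i, g ∣ (P i).map φ := by
      intro i
      rw [← Ideal.mem_span_singleton, ← hg']
      exact Ideal.subset_span ⟨i, rfl⟩
    have := hcop g hgd
    rw [hg', Ideal.span_singleton_eq_top]
    exact this
  obtain ⟨A, hA⟩ := Ideal.mem_span_range_iff_exists_fun.mp
    (hspan ▸ Submodule.mem_top : (1 : Polynomial K) ∈ _)
  choose b hb using fun i =>
    IsLocalization.integerNormalization_map_to_map (nonZeroDivisors Z) (A i)
  refine ⟨∏ i, (b i : Z), ?_, ?_⟩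
  · exact Finset.prod_ne_zero_iff.mpr fun i _ => nonZeroDivisors.coe_ne_zero (b i)
  · refine ⟨fun i => (∏ j ∈ Finset.univ.erase i, (b j : Z)) •
      IsLocalization.integerNormalization (nonZeroDivisors Z) (A i), ?_⟩
    have hinj : Function.Injective (Polynomial.map φ) :=
      Polynomial.map_injective φ (IsFractionRing.injective Z K)
    apply hinj
    have hsm : ∀ (x : Z) (p : Polynomial K), x • p = C (φ x) * p := fun x p => by
      rw [← algebraMap_smul K x p, Polynomial.smul_eq_C_mul]
    have key : ∀ i : Fin ℓ, Polynomial.map φ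
        (((∏ j ∈ Finset.univ.erase i, (b j : Z)) •
          IsLocalization.integerNormalization (nonZeroDivisors Z) (A i)) * P i)
        = C (φ (∏ j, (b j : Z))) * (A i * (P i).map φ) := by
      intro i
      rw [Polynomial.map_mul, Polynomial.map_smul, hb i, hsm, smul_eq_C_mul, ← mul_assoc,
        ← map_mul, ← map_mul, Finset.prod_erase_mul _ _ (Finset.mem_univ i), mul_assoc]
    rw [Polynomial.map_sum, Finset.sum_congr rfl (fun i _ => key i), ← Finset.mul_sum, hA,
      mul_one, Polynomial.map_C]


theorem gcd_set_finite_stable_PID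
    (Z : Type*) [CommRing Z] [IsDomain Z] [IsPrincipalIdealRing Z]
    (ℓ : ℕ) (hℓ : 2 ≤ ℓ)
    (P : Fin ℓ → Polynomial Z)
    (hne : ∀ i, P i ≠ 0)
    (hcop : ∀ d : Polynomial (FractionRing Z),
      (∀ i, d ∣ (P i).map (algebraMap Z (FractionRing Z))) → IsUnit d) :
    Set.Finite {I : Ideal Z | ∃ m : Z,
        I = Ideal.span (Set.range fun i => (P i).eval m)} ∧
    ∀ m m' : Z, ∃ m'' : Z,
      Ideal.span (Set.range fun i => (P i).eval m'') =
        Ideal.span (Set.range fun i => (P i).eval m) ⊔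
          Ideal.span (Set.range fun i => (P i).eval m') := by
  classical
  obtain ⟨c, hc0, B, hB⟩ := aux_common_denominator Z ℓ P hcop
  set I : Z → Ideal Z := fun m => Ideal.span (Set.range fun i => (P i).eval m) with hIdef
  have hcI : ∀ m, c ∈ I m := by
    intro m
    refine Ideal.mem_span_range_iff_exists_fun.mpr ⟨fun i => (B i).eval m, ?_⟩
    have := congrArg (Polynomial.eval m) hB
    simpa [Polynomial.eval_finset_sum] using this.symm
  set Cc : Ideal Z := Ideal.span {c} with hCcdef
  have hCc0 : Cc ≠ ⊥ := by
    simpa [hCcdef, Ideal.span_singleton_eq_bot] using hc0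
  have hle : ∀ m, Cc ≤ I m := fun m => by
    rw [hCcdef, Ideal.span_le, Set.singleton_subset_iff]; exact hcI m
  have hI0 : ∀ m, I m ≠ ⊥ := fun m h => hCc0 (le_bot_iff.mp (h ▸ hle m))
  -- congruence lemma
  have key : ∀ (W : Ideal Z) (x y : Z), x - y ∈ W → I x ⊔ W = I y ⊔ W := by
    have main : ∀ (W : Ideal Z) (x y : Z), x - y ∈ W → I x ≤ I y ⊔ W := by
      intro W x y hxy
      rw [hIdef, Ideal.span_le]
      rintro _ ⟨i, rfl⟩
      show (P i).eval x ∈ _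
      obtain ⟨t, ht⟩ := Polynomial.sub_dvd_eval_sub x y (P i)
      have h1 : (P i).eval x - (P i).eval y ∈ W := ht ▸ W.mul_mem_right t hxy
      have h2 : (P i).eval x = (P i).eval y + ((P i).eval x - (P i).eval y) := by ring
      rw [h2]
      exact add_mem (Ideal.mem_sup_left (Ideal.subset_span ⟨i, rfl⟩))
        (Ideal.mem_sup_right h1)
    intro W x y hxy
    refine le_antisymm (sup_le (main W x y hxy) le_sup_right)
      (sup_le (main W y x (by simpa using W.neg_mem hxy)) le_sup_right)
  constructor
  · -- finiteness
    haveI : Fintype {J : Ideal Z // J ∣ Cc} :=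
      UniqueFactorizationMonoid.fintypeSubtypeDvd Cc (by rwa [Ideal.zero_eq_bot])
    refine Set.Finite.subset (Set.finite_coe_iff.mp (Finite.of_fintype
      {J : Ideal Z // J ∣ Cc})) ?_
    rintro J ⟨m, rfl⟩
    exact Ideal.dvd_iff_le.mpr (hle m)
  · intro m m'
    set nfC := normalizedFactors Cc with hnfC
    set pr : Ideal Z → Prop := fun p =>
      count p (normalizedFactors (I m)) ≤ count p (normalizedFactors (I m')) with hpr
    set U : Ideal Z := (nfC.filter pr).prod with hU
    set V : Ideal Z := (nfC.filter (fun p => ¬ pr p)).prod with hV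
    have hprimesC : ∀ p ∈ nfC, Prime p := fun p hp => prime_of_normalized_factor p hp
    have hUV : U * V = Cc := by
      rw [hU, hV, ← Multiset.prod_add, Multiset.filter_add_not]
      exact prod_normalizedFactors_eq_self hCc0
    have hUV0 : U * V ≠ 0 := by rw [hUV, Ideal.zero_eq_bot]; exact hCc0
    have hU0 : U ≠ ⊥ := by rw [← Ideal.zero_eq_bot]; exact left_ne_zero_of_mul hUV0
    have hV0 : V ≠ ⊥ := by rw [← Ideal.zero_eq_bot]; exact right_ne_zero_of_mul hUV0
    have hnfU : normalizedFactors U = nfC.filter pr :=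
      normalizedFactors_prod_of_prime (fun p hp => hprimesC p (Multiset.mem_of_mem_filter hp))
    have hnfV : normalizedFactors V = nfC.filter (fun p => ¬ pr p) :=
      normalizedFactors_prod_of_prime (fun p hp => hprimesC p (Multiset.mem_of_mem_filter hp))
    -- U ⊔ V = ⊤
    have hsupUV : U ⊔ V = ⊤ := by
      rw [sup_eq_prod_inf_factors hU0 hV0, hnfU, hnfV]
      have : nfC.filter pr ∩ nfC.filter (fun p => ¬ pr p) = 0 := by
        ext a
        simp only [Multiset.count_inter, Multiset.count_filter, Multiset.count_zero]
        split <;> simp_all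
      rw [this, Multiset.prod_zero, Ideal.one_eq_top]
    -- CRT element
    obtain ⟨u, hu, v, hv, huv⟩ := Submodule.mem_sup.mp
      (hsupUV ▸ Submodule.mem_top : (1 : Z) ∈ U ⊔ V)
    refine ⟨m' * u + m * v, ?_⟩
    have hmU : (m' * u + m * v) - m ∈ U := by
      have h : (m' * u + m * v) - m = (m' - m) * u := by linear_combination m * huv
      rw [h]; exact U.mul_mem_left _ hu
    have hmV : (m' * u + m * v) - m' ∈ V := by
      have h : (m' * u + m * v) - m' = (m - m') * v := by linear_combination m' * huv
      rw [h]; exact V.mul_mem_left _ hv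
    set G : Ideal Z := I (m' * u + m * v) with hG
    have hGU : G ⊔ U = I m ⊔ U := key U _ m hmU
    have hGV : G ⊔ V = I m' ⊔ V := key V _ m' hmV
    have hG0 : G ≠ ⊥ := hI0 _
    -- counts
    have hcnt : ∀ (X Y W : Ideal Z), X ≠ ⊥ → Y ≠ ⊥ → W ≠ ⊥ → X ⊔ W = Y ⊔ W →
        ∀ p, min (count p (normalizedFactors X)) (count p (normalizedFactors W))
          = min (count p (normalizedFactors Y)) (count p (normalizedFactors W)) := by
      intro X Y W hX hY hW hXY p
      have h1 : (normalizedFactors X ∩ normalizedFactors W).prod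
          = (normalizedFactors Y ∩ normalizedFactors W).prod := by
        rw [← sup_eq_prod_inf_factors hX hW, ← sup_eq_prod_inf_factors hY hW, hXY]
      have h2 : normalizedFactors X ∩ normalizedFactors W
          = normalizedFactors Y ∩ normalizedFactors W := by
        have e1 := normalizedFactors_prod_of_prime (m := normalizedFactors X ∩ normalizedFactors W)
          (fun p hp => prime_of_normalized_factor p (Multiset.mem_inter.mp hp).1)
        have e2 := normalizedFactors_prod_of_prime (m := normalizedFactors Y ∩ normalizedFactors W)
          (fun p hp => prime_of_normalized_factor p (Multiset.mem_inter.mp hp).1)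
        rw [← e1, ← e2, h1]
      have := congrArg (count p) h2
      simpa [Multiset.count_inter] using this
    have hcapG : ∀ p, count p (normalizedFactors G) ≤ count p nfC :=
      fun p => count_le_of_ideal_ge (hle _) hCc0 p
    have hcapA : ∀ p, count p (normalizedFactors (I m)) ≤ count p nfC :=
      fun p => count_le_of_ideal_ge (hle _) hCc0 p
    have hcapB : ∀ p, count p (normalizedFactors (I m')) ≤ count p nfC :=
      fun p => count_le_of_ideal_ge (hle _) hCc0 p
    -- conclude
    have goal : G = I m ⊔ I m' := by
      rw [sup_eq_prod_inf_factors (hI0 m) (hI0 m')]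
      rw [← prod_normalizedFactors_eq_self hG0]
      congr 1
      ext p
      rw [Multiset.count_inter]
      have e1 := hcnt G (I m) U hG0 (hI0 m) hU0 hGU p
      have e2 := hcnt G (I m') V hG0 (hI0 m') hV0 hGV p
      rw [hnfU, Multiset.count_filter] at e1
      rw [hnfV, Multiset.count_filter] at e2
      have hGp := hcapG p; have hAp := hcapA p; have hBp := hcapB p
      by_cases hp : pr p
      · rw [if_pos hp] at e1
        have hp2 : count p (normalizedFactors (I m)) ≤ count p (normalizedFactors (I m')) := hp
        omega
      · rw [if_pos hp] at e2
        have hp2 : ¬ (count p (normalizedFactors (I m)) ≤ count p (normalizedFactors (I m'))) := hp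
        omega
    exact goal
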